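/- In the policy iteration method for the discrete coupled HJB system, the sequence of value functions is monotone nondecreasing: V^(ι) ≤ V^(ι+1) componentwise for all ι ∈ ℕ, and since each V^(ι) ≤ 0 (comparison with the zero supersolution), the sequence converges pointwise to the unique bounded solution of the discrete Bellman equation. -/
import Mathlib


open Filter

/-- The Bellman right-hand side for consumption `c` at node `(i,j)` given value
function `W`. -/
noncomputable def bellmanRHS (ρ h r : ℝ) (lam y : Fin 2 → ℝ) (u : ℝ → ℝ)
    (β : ℕ → ℝ → ℝ) (x : ℕ → ℝ) (W : ℕ → Fin 2 → ℝ) (i : ℕ) (j : Fin 2) (c : ℝ) : ℝ :=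
  h * u c + (1 - ρ * h) *
    (lam j * h * W i (1 - j) +
      (1 - lam j * h) * ∑' k, β k (x i + h * (r * x i + y j - c)) * W k j)

/-- `W` solves the discrete Bellman equation. -/
def SolvesBellman (ρ h r : ℝ) (lam y : Fin 2 → ℝ) (u : ℝ → ℝ)
    (β : ℕ → ℝ → ℝ) (x : ℕ → ℝ) (C : ℕ → Fin 2 → Set ℝ) (W : ℕ → Fin 2 → ℝ) : Prop :=
  ∀ i j, W i j = sSup ((bellmanRHS ρ h r lam y u β x W i j) '' C i j)

section Aux

variable {ρ h r : ℝ} {lam y : Fin 2 → ℝ} {u : ℝ → ℝ} {β : ℕ → ℝ → ℝ} {x : ℕ → ℝ}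

lemma aux_summ (hβ0 : ∀ k z, 0 ≤ β k z) (hβ1 : ∀ z, HasSum (fun k => β k z) 1)
    {W : ℕ → Fin 2 → ℝ} {M : ℝ} (hW : ∀ i j, |W i j| ≤ M) (z : ℝ) (j : Fin 2) :
    Summable (fun k => β k z * W k j) := by
  apply Summable.of_norm
  refine Summable.of_nonneg_of_le (fun k => norm_nonneg _) (fun k => ?_)
    (((hβ1 z).summable).mul_right M)
  rw [norm_mul, Real.norm_eq_abs, Real.norm_eq_abs, abs_of_nonneg (hβ0 k z)]
  exact mul_le_mul_of_nonneg_left (hW k j) (hβ0 k z)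

lemma aux_tsum_le (hβ0 : ∀ k z, 0 ≤ β k z) (hβ1 : ∀ z, HasSum (fun k => β k z) 1)
    {W : ℕ → Fin 2 → ℝ} {M : ℝ} (hW : ∀ i j, |W i j| ≤ M) (z : ℝ) (j : Fin 2)
    {S : ℝ} (hS : ∀ k, W k j ≤ S) :
    ∑' k, β k z * W k j ≤ S := by
  have h1 : ∑' k, β k z * W k j ≤ ∑' k, β k z * S :=
    Summable.tsum_le_tsum (fun k => mul_le_mul_of_nonneg_left (hS k) (hβ0 k z))
      (aux_summ hβ0 hβ1 hW z j) ((hβ1 z).mul_right S).summable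
  rwa [((hβ1 z).mul_right S).tsum_eq, one_mul] at h1

lemma aux_rhs_diff (hβ0 : ∀ k z, 0 ≤ β k z) (hβ1 : ∀ z, HasSum (fun k => β k z) 1)
    {W W' : ℕ → Fin 2 → ℝ} {M M' : ℝ}
    (hW : ∀ i j, |W i j| ≤ M) (hW' : ∀ i j, |W' i j| ≤ M') (i : ℕ) (j : Fin 2) (c : ℝ) :
    bellmanRHS ρ h r lam y u β x W i j c - bellmanRHS ρ h r lam y u β x W' i j c
      = (1 - ρ * h) * (lam j * h * (W i (1 - j) - W' i (1 - j)) +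
        (1 - lam j * h) * ∑' k, β k (x i + h * (r * x i + y j - c)) * (W k j - W' k j)) := by
  have hs := aux_summ hβ0 hβ1 hW (x i + h * (r * x i + y j - c)) j
  have hs' := aux_summ hβ0 hβ1 hW' (x i + h * (r * x i + y j - c)) j
  have key : ∑' k, β k (x i + h * (r * x i + y j - c)) * (W k j - W' k j)
      = (∑' k, β k (x i + h * (r * x i + y j - c)) * W k j)
        - ∑' k, β k (x i + h * (r * x i + y j - c)) * W' k j := by
    rw [← Summable.tsum_sub hs hs']
    congr 1
    funext k
    ring
  simp only [bellmanRHS]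
  rw [key]
  ring

lemma aux_rhs_mono (hρh : ρ * h < 1) (hh : 0 < h)
    (hlam0 : ∀ j, 0 ≤ lam j) (hlamh : ∀ j, lam j * h ≤ 1)
    (hβ0 : ∀ k z, 0 ≤ β k z) (hβ1 : ∀ z, HasSum (fun k => β k z) 1)
    {W W' : ℕ → Fin 2 → ℝ} {M M' : ℝ}
    (hW : ∀ i j, |W i j| ≤ M) (hW' : ∀ i j, |W' i j| ≤ M')
    (hle : ∀ i j, W i j ≤ W' i j) (i : ℕ) (j : Fin 2) (c : ℝ) :
    bellmanRHS ρ h r lam y u β x W i j c ≤ bellmanRHS ρ h r lam y u β x W' i j c := by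
  have hd := aux_rhs_diff (ρ := ρ) (h := h) (r := r) (lam := lam) (y := y) (u := u)
    (x := x) hβ0 hβ1 hW hW' i j c
  have ht : ∑' k, β k (x i + h * (r * x i + y j - c)) * (W k j - W' k j) ≤ 0 := by
    have hbd : ∀ i' j', |W i' j' - W' i' j'| ≤ M + M' := fun i' j' =>
      (abs_sub _ _).trans (add_le_add (hW i' j') (hW' i' j'))
    exact aux_tsum_le (W := fun k l => W k l - W' k l) hβ0 hβ1 hbd _ j
      (fun k => sub_nonpos.2 (hle k j))
  have h1 : lam j * h * (W i (1 - j) - W' i (1 - j)) ≤ 0 :=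
    mul_nonpos_of_nonneg_of_nonpos (mul_nonneg (hlam0 j) hh.le)
      (sub_nonpos.2 (hle i (1 - j)))
  have h2 : (1 - lam j * h) * ∑' k, β k (x i + h * (r * x i + y j - c)) * (W k j - W' k j) ≤ 0 :=
    mul_nonpos_of_nonneg_of_nonpos (by linarith [hlamh j]) ht
  have h3 : (1 - ρ * h) * (lam j * h * (W i (1 - j) - W' i (1 - j)) +
      (1 - lam j * h) * ∑' k, β k (x i + h * (r * x i + y j - c)) * (W k j - W' k j)) ≤ 0 :=
    mul_nonpos_of_nonneg_of_nonpos (by linarith) (by linarith)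
  linarith [hd, h3]

lemma aux_rhs_ub (hh : 0 < h) (hρh : ρ * h < 1)
    (hlam0 : ∀ j, 0 ≤ lam j) (hlamh : ∀ j, lam j * h ≤ 1)
    (hu : ∀ c, u c ≤ 0)
    (hβ0 : ∀ k z, 0 ≤ β k z) (hβ1 : ∀ z, HasSum (fun k => β k z) 1)
    {W : ℕ → Fin 2 → ℝ} {M : ℝ} (hW : ∀ i j, |W i j| ≤ M)
    {S : ℝ} (hS : ∀ i j, W i j ≤ S) (i : ℕ) (j : Fin 2) (c : ℝ) :
    bellmanRHS ρ h r lam y u β x W i j c ≤ (1 - ρ * h) * S := by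
  have hu' : h * u c ≤ 0 := mul_nonpos_of_nonneg_of_nonpos hh.le (hu c)
  have h1 : lam j * h * W i (1 - j) ≤ lam j * h * S :=
    mul_le_mul_of_nonneg_left (hS i (1 - j)) (mul_nonneg (hlam0 j) hh.le)
  have h2 : ∑' k, β k (x i + h * (r * x i + y j - c)) * W k j ≤ S :=
    aux_tsum_le hβ0 hβ1 hW _ j (fun k => hS k j)
  have h3 : (1 - lam j * h) * ∑' k, β k (x i + h * (r * x i + y j - c)) * W k j
      ≤ (1 - lam j * h) * S := mul_le_mul_of_nonneg_left h2 (by linarith [hlamh j])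
  have h4 : lam j * h * S + (1 - lam j * h) * S = S := by ring
  have h5 : lam j * h * W i (1 - j) +
      (1 - lam j * h) * ∑' k, β k (x i + h * (r * x i + y j - c)) * W k j ≤ S := by
    linarith
  have h6 := mul_le_mul_of_nonneg_left h5 (by linarith : (0:ℝ) ≤ 1 - ρ * h)
  simp only [bellmanRHS]
  linarith

lemma aux_comp_nonpos (hρ : 0 < ρ) (hh : 0 < h) (hρh : ρ * h < 1)
    (hlam0 : ∀ j, 0 ≤ lam j) (hlamh : ∀ j, lam j * h ≤ 1)
    (hβ0 : ∀ k z, 0 ≤ β k z) (hβ1 : ∀ z, HasSum (fun k => β k z) 1)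
    (Δ : ℕ → Fin 2 → ℝ) {M : ℝ} (hbd : ∀ i j, |Δ i j| ≤ M) (z : ℕ → Fin 2 → ℝ)
    (hΔ : ∀ i j, Δ i j ≤ (1 - ρ * h) * (lam j * h * Δ i (1 - j) +
      (1 - lam j * h) * ∑' k, β k (z i j) * Δ k j)) :
    ∀ i j, Δ i j ≤ 0 := by
  have hbdd : BddAbove (Set.range fun p : ℕ × Fin 2 => Δ p.1 p.2) :=
    ⟨M, by rintro _ ⟨p, rfl⟩; exact (abs_le.1 (hbd p.1 p.2)).2⟩
  set S := ⨆ p : ℕ × Fin 2, Δ p.1 p.2 with hSdef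
  have hle : ∀ i j, Δ i j ≤ S := fun i j => le_ciSup hbdd (i, j)
  have hDS : ∀ i j, Δ i j ≤ (1 - ρ * h) * S := by
    intro i j
    refine (hΔ i j).trans (mul_le_mul_of_nonneg_left ?_ (by linarith : (0:ℝ) ≤ 1 - ρ * h))
    have h1 : lam j * h * Δ i (1 - j) ≤ lam j * h * S :=
      mul_le_mul_of_nonneg_left (hle i (1 - j)) (mul_nonneg (hlam0 j) hh.le)
    have h2 : ∑' k, β k (z i j) * Δ k j ≤ S :=
      aux_tsum_le hβ0 hβ1 hbd _ j (fun k => hle k j)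
    have h3 : (1 - lam j * h) * ∑' k, β k (z i j) * Δ k j ≤ (1 - lam j * h) * S :=
      mul_le_mul_of_nonneg_left h2 (by linarith [hlamh j])
    have h4 : lam j * h * S + (1 - lam j * h) * S = S := by ring
    linarith
  have hS : S ≤ (1 - ρ * h) * S := ciSup_le fun p => hDS p.1 p.2
  have hS0 : S ≤ 0 := by
    by_contra hc
    push_neg at hc
    nlinarith [mul_pos (mul_pos hρ hh) hc]
  exact fun i j => (hle i j).trans hS0

end Aux

section Aux2

variable {ρ h r : ℝ} {lam y : Fin 2 → ℝ} {u : ℝ → ℝ} {β : ℕ → ℝ → ℝ} {x : ℕ → ℝ}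
  {C : ℕ → Fin 2 → Set ℝ}

/-- One-sided Lipschitz estimate between two bounded solutions of the Bellman equation. -/
lemma aux_half (hh : 0 < h) (hρh : ρ * h < 1)
    (hlam0 : ∀ j, 0 ≤ lam j) (hlamh : ∀ j, lam j * h ≤ 1)
    (hu : ∀ c, u c ≤ 0)
    (hβ0 : ∀ k z, 0 ≤ β k z) (hβ1 : ∀ z, HasSum (fun k => β k z) 1)
    (hC : ∀ i j, (C i j).Nonempty)
    {A B : ℕ → Fin 2 → ℝ} {MA MB : ℝ}
    (hA : ∀ i j, |A i j| ≤ MA) (hB : ∀ i j, |B i j| ≤ MB)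
    (hsolA : ∀ i j, A i j = sSup ((bellmanRHS ρ h r lam y u β x A i j) '' C i j))
    (hsolB : ∀ i j, B i j = sSup ((bellmanRHS ρ h r lam y u β x B i j) '' C i j))
    {S : ℝ} (hS : ∀ i j, A i j - B i j ≤ S) :
    ∀ i j, A i j - B i j ≤ (1 - ρ * h) * S := by
  intro i j
  have hMB0 : 0 ≤ MB := (abs_nonneg _).trans (hB 0 0)
  have hbddB : BddAbove ((bellmanRHS ρ h r lam y u β x B i j) '' C i j) := by
    refine ⟨(1 - ρ * h) * MB, ?_⟩
    rintro _ ⟨c, hc, rfl⟩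
    exact aux_rhs_ub hh hρh hlam0 hlamh hu hβ0 hβ1 hB
      (fun i' j' => (abs_le.1 (hB i' j')).2) i j c
  rw [hsolA i j, hsolB i j, sub_le_iff_le_add]
  apply csSup_le ((hC i j).image _)
  rintro _ ⟨c, hc, rfl⟩
  have hd := aux_rhs_diff (ρ := ρ) (h := h) (r := r) (lam := lam) (y := y) (u := u)
    (x := x) hβ0 hβ1 hA hB i j c
  have h2 : bellmanRHS ρ h r lam y u β x B i j c
      ≤ sSup ((bellmanRHS ρ h r lam y u β x B i j) '' C i j) :=
    le_csSup hbddB ⟨c, hc, rfl⟩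
  have hbdAB : ∀ i' j', |A i' j' - B i' j'| ≤ MA + MB := fun i' j' =>
    (abs_sub _ _).trans (add_le_add (hA i' j') (hB i' j'))
  have h3 : ∑' k, β k (x i + h * (r * x i + y j - c)) * (A k j - B k j) ≤ S :=
    aux_tsum_le (W := fun k l => A k l - B k l) hβ0 hβ1 hbdAB _ j (fun k => hS k j)
  have h4 : lam j * h * (A i (1 - j) - B i (1 - j)) ≤ lam j * h * S :=
    mul_le_mul_of_nonneg_left (hS i (1 - j)) (mul_nonneg (hlam0 j) hh.le)
  have h5 : (1 - lam j * h) * ∑' k, β k (x i + h * (r * x i + y j - c)) * (A k j - B k j)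
      ≤ (1 - lam j * h) * S := mul_le_mul_of_nonneg_left h3 (by linarith [hlamh j])
  have h6 : lam j * h * S + (1 - lam j * h) * S = S := by ring
  have h7 : lam j * h * (A i (1 - j) - B i (1 - j)) +
      (1 - lam j * h) * ∑' k, β k (x i + h * (r * x i + y j - c)) * (A k j - B k j) ≤ S := by
    linarith
  have h8 := mul_le_mul_of_nonneg_left h7 (by linarith : (0:ℝ) ≤ 1 - ρ * h)
  linarith [hd, h8, h2]

end Aux2

/-- In policy iteration (Howard's algorithm) for the discrete coupled HJB
system, the value functions are monotone nondecreasing, `V^(ι) ≤ V^(ι+1)`, each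
`V^(ι) ≤ 0` (comparison with the zero supersolution, using `u ≤ 0`), and the sequence
converges pointwise to the unique bounded solution of the discrete Bellman equation. -/
theorem stmt_13 (ρ h r : ℝ) (hρ : 0 < ρ) (hh : 0 < h) (hρh : ρ * h < 1)
    (lam y : Fin 2 → ℝ) (hlam0 : ∀ j, 0 ≤ lam j) (hlamh : ∀ j, lam j * h ≤ 1)
    (u : ℝ → ℝ) (hu : ∀ c, u c ≤ 0)
    (β : ℕ → ℝ → ℝ) (hβ0 : ∀ k z, 0 ≤ β k z) (hβ1 : ∀ z, HasSum (fun k => β k z) 1)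
    (x : ℕ → ℝ) (C : ℕ → Fin 2 → Set ℝ) (hC : ∀ i j, (C i j).Nonempty)
    (cpol : ℕ → ℕ → Fin 2 → ℝ) (hcpol : ∀ ι i j, cpol ι i j ∈ C i j)
    (V : ℕ → ℕ → Fin 2 → ℝ)
    (hVbd : ∀ ι, ∃ M, ∀ i j, |V ι i j| ≤ M)
    (heval : ∀ ι i j, V ι i j = bellmanRHS ρ h r lam y u β x (V ι) i j (cpol ι i j))
    (hupdate : ∀ ι i j, ∀ c ∈ C i j,
      bellmanRHS ρ h r lam y u β x (V ι) i j c
        ≤ bellmanRHS ρ h r lam y u β x (V ι) i j (cpol (ι + 1) i j)) :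
    (∀ ι i j, V ι i j ≤ V (ι + 1) i j) ∧
    (∀ ι i j, V ι i j ≤ 0) ∧
    ∃ Vstar : ℕ → Fin 2 → ℝ,
      (∃ M, ∀ i j, |Vstar i j| ≤ M) ∧
      SolvesBellman ρ h r lam y u β x C Vstar ∧
      (∀ i j, Tendsto (fun ι => V ι i j) atTop (nhds (Vstar i j))) ∧
      (∀ W : ℕ → Fin 2 → ℝ, (∃ M, ∀ i j, |W i j| ≤ M) →
        SolvesBellman ρ h r lam y u β x C W → W = Vstar) := by
  
  obtain ⟨M0, hM0⟩ := hVbd 0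
  have hM0nn : 0 ≤ M0 := (abs_nonneg _).trans (hM0 0 0)
  -- monotonicity
  have mono : ∀ ι i j, V ι i j ≤ V (ι + 1) i j := by
    intro ι
    obtain ⟨Ma, hMa⟩ := hVbd ι
    obtain ⟨Mb, hMb⟩ := hVbd (ι + 1)
    have hbd : ∀ i j, |V ι i j - V (ι + 1) i j| ≤ Ma + Mb := fun i j =>
      (abs_sub _ _).trans (add_le_add (hMa i j) (hMb i j))
    have key : ∀ i j, V ι i j - V (ι + 1) i j ≤ (1 - ρ * h) *
        (lam j * h * (V ι i (1 - j) - V (ι + 1) i (1 - j)) + (1 - lam j * h) *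
          ∑' k, β k (x i + h * (r * x i + y j - cpol (ι + 1) i j)) *
            (V ι k j - V (ι + 1) k j)) := by
      intro i j
      have e1 : V ι i j ≤ bellmanRHS ρ h r lam y u β x (V ι) i j (cpol (ι + 1) i j) :=
        (heval ι i j).trans_le (hupdate ι i j _ (hcpol ι i j))
      have e2 := heval (ι + 1) i j
      have hd := aux_rhs_diff (ρ := ρ) (h := h) (r := r) (lam := lam) (y := y) (u := u)
        (x := x) hβ0 hβ1 hMa hMb i j (cpol (ι + 1) i j)
      linarith [hd, e1, e2]
    have := aux_comp_nonpos hρ hh hρh hlam0 hlamh hβ0 hβ1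
      (fun i j => V ι i j - V (ι + 1) i j) hbd
      (fun i j => x i + h * (r * x i + y j - cpol (ι + 1) i j)) key
    intro i j
    have h9 : V ι i j - V (ι + 1) i j ≤ 0 := this i j
    linarith
  -- nonpositivity
  have nonpos : ∀ ι i j, V ι i j ≤ 0 := by
    intro ι
    obtain ⟨Ma, hMa⟩ := hVbd ι
    refine aux_comp_nonpos hρ hh hρh hlam0 hlamh hβ0 hβ1 (V ι) hMa
      (fun i j => x i + h * (r * x i + y j - cpol ι i j)) ?_
    intro i j
    have e := heval ι i j
    simp only [bellmanRHS] at e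
    have hu' : h * u (cpol ι i j) ≤ 0 := mul_nonpos_of_nonneg_of_nonpos hh.le (hu _)
    linarith [e, hu']
  have monoNat : ∀ i j, Monotone fun ι => V ι i j := fun i j =>
    monotone_nat_of_le_succ (fun ι => mono ι i j)
  have unif : ∀ ι i j, |V ι i j| ≤ M0 := by
    intro ι i j
    rw [abs_le]
    constructor
    · have h1 := monoNat i j (Nat.zero_le ι)
      have h2 := (abs_le.1 (hM0 i j)).1
      simp only at h1
      linarith
    · exact (nonpos ι i j).trans hM0nn
  set Vstar : ℕ → Fin 2 → ℝ := fun i j => ⨆ ι, V ι i j with hVstarDef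
  have hbddr : ∀ i j, BddAbove (Set.range fun ι => V ι i j) := fun i j =>
    ⟨0, by rintro _ ⟨ι, rfl⟩; exact nonpos ι i j⟩
  have htend : ∀ i j, Tendsto (fun ι => V ι i j) atTop (nhds (Vstar i j)) := fun i j =>
    tendsto_atTop_ciSup (monoNat i j) (hbddr i j)
  have hVle : ∀ ι i j, V ι i j ≤ Vstar i j := fun ι i j => le_ciSup (hbddr i j) ι
  have hVstar0 : ∀ i j, Vstar i j ≤ 0 := fun i j => ciSup_le (fun ι => nonpos ι i j)
  have hVstarbd : ∀ i j, |Vstar i j| ≤ M0 := by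
    intro i j
    rw [abs_le]
    refine ⟨?_, (hVstar0 i j).trans hM0nn⟩
    have h1 := hVle 0 i j
    have h2 := (abs_le.1 (hM0 i j)).1
    linarith
  have hsol : ∀ i j, Vstar i j =
      sSup ((bellmanRHS ρ h r lam y u β x Vstar i j) '' C i j) := by
    intro i j
    have hbddI : BddAbove ((bellmanRHS ρ h r lam y u β x Vstar i j) '' C i j) := by
      refine ⟨(1 - ρ * h) * 0, ?_⟩
      rintro _ ⟨c, hc, rfl⟩
      exact aux_rhs_ub hh hρh hlam0 hlamh hu hβ0 hβ1 hVstarbd hVstar0 i j c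
    refine le_antisymm (ciSup_le fun ι => ?_) (csSup_le ((hC i j).image _) ?_)
    · calc V ι i j = bellmanRHS ρ h r lam y u β x (V ι) i j (cpol ι i j) := heval ι i j
        _ ≤ bellmanRHS ρ h r lam y u β x Vstar i j (cpol ι i j) :=
          aux_rhs_mono hρh hh hlam0 hlamh hβ0 hβ1 (unif ι) hVstarbd
            (fun i' j' => hVle ι i' j') i j _
        _ ≤ _ := le_csSup hbddI ⟨cpol ι i j, hcpol ι i j, rfl⟩
    · rintro _ ⟨c, hc, rfl⟩
      have key : ∀ ι, bellmanRHS ρ h r lam y u β x (V ι) i j c ≤ Vstar i j := by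
        intro ι
        calc bellmanRHS ρ h r lam y u β x (V ι) i j c
            ≤ bellmanRHS ρ h r lam y u β x (V ι) i j (cpol (ι + 1) i j) :=
              hupdate ι i j c hc
          _ ≤ bellmanRHS ρ h r lam y u β x (V (ι + 1)) i j (cpol (ι + 1) i j) :=
              aux_rhs_mono hρh hh hlam0 hlamh hβ0 hβ1 (unif ι) (unif (ι + 1))
                (fun i' j' => mono ι i' j') i j _
          _ = V (ι + 1) i j := (heval (ι + 1) i j).symm
          _ ≤ Vstar i j := hVle (ι + 1) i j
      have lim : Tendsto (fun ι => bellmanRHS ρ h r lam y u β x (V ι) i j c) atTop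
          (nhds (bellmanRHS ρ h r lam y u β x Vstar i j c)) := by
        simp only [bellmanRHS]
        have tT : Tendsto (fun ι => ∑' k, β k (x i + h * (r * x i + y j - c)) * V ι k j)
            atTop (nhds (∑' k, β k (x i + h * (r * x i + y j - c)) * Vstar k j)) := by
          refine tendsto_tsum_of_dominated_convergence
            (bound := fun k => β k (x i + h * (r * x i + y j - c)) * M0)
            (((hβ1 _).summable).mul_right M0)
            (fun k => (htend k j).const_mul _) (Eventually.of_forall fun ι k => ?_)
          rw [norm_mul, Real.norm_eq_abs, Real.norm_eq_abs,
            abs_of_nonneg (hβ0 k (x i + h * (r * x i + y j - c)))]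
          exact mul_le_mul_of_nonneg_left (unif ι k j) (hβ0 k _)
        exact tendsto_const_nhds.add
          ((((htend i (1 - j)).const_mul (lam j * h)).add
            (tT.const_mul (1 - lam j * h))).const_mul (1 - ρ * h))
      exact le_of_tendsto lim (Eventually.of_forall key)
  refine ⟨mono, nonpos, Vstar, ⟨M0, hVstarbd⟩, hsol, htend, ?_⟩
  intro W hWbd hWsol
  obtain ⟨MW, hMW⟩ := hWbd
  have hbddS : BddAbove (Set.range fun p : ℕ × Fin 2 => |W p.1 p.2 - Vstar p.1 p.2|) :=
    ⟨MW + M0, by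
      rintro _ ⟨p, rfl⟩
      exact (abs_sub _ _).trans (add_le_add (hMW _ _) (hVstarbd _ _))⟩
  set S := ⨆ p : ℕ × Fin 2, |W p.1 p.2 - Vstar p.1 p.2| with hSdef
  have hSle : ∀ i j, |W i j - Vstar i j| ≤ S := fun i j => le_ciSup hbddS (i, j)
  have d1 := aux_half hh hρh hlam0 hlamh hu hβ0 hβ1 hC hMW hVstarbd hWsol hsol
    (S := S) (fun i j => (le_abs_self _).trans (hSle i j))
  have d2 := aux_half hh hρh hlam0 hlamh hu hβ0 hβ1 hC hVstarbd hMW hsol hWsol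
    (S := S) (fun i j => (le_abs_self _).trans (by rw [abs_sub_comm]; exact hSle i j))
  have hcontr : S ≤ (1 - ρ * h) * S := by
    refine ciSup_le fun p => ?_
    rw [abs_sub_le_iff]
    exact ⟨d1 p.1 p.2, d2 p.1 p.2⟩
  have hS0 : S ≤ 0 := by
    by_contra hcc
    push_neg at hcc
    nlinarith [mul_pos (mul_pos hρ hh) hcc]
  funext i j
  have h0 : |W i j - Vstar i j| = 0 := le_antisymm ((hSle i j).trans hS0) (abs_nonneg _)
  have := abs_eq_zero.1 h0
  linarith [sub_eq_zero.1 this]
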